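/- Let l : ℝ → ℝ be five times continuously differentiable with a local minimum at z* satisfying l''(z*) > 0 and α_l(z*) = 3(l'''(z*))² − l''''(z*)·l''(z*) > 0, and let Ẑ be a twice continuously differentiable function on a neighborhood of z* with Ẑ(z*) = 2/l''(z*), l'(z) + l'(z − Ẑ(z)·l'(z)) = 0 for all z in the neighborhood, Ẑ'(z*) = 0, and Ẑ''(z*) = 2·α_l(z*)/(3·(l''(z*))³). Define o(z) = z − Ẑ(z)·l'(z) and, for z ≠ z*, Φ(z) = (−Ẑ'(z)·l'(z)·z·(l''(o(z)) + 2/Ẑ(z)) + 2·l'(z)) / (Ẑ'(z)·l''(o(z))). Then Φ(z) tends to the limit 3·(l''(z*))³/α_l(z*) as z → z*. -/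

import Mathlib

open Filter Topology

private lemma div_div_same_cancel (A B c : ℝ) (hc : c ≠ 0) :
    (A / c) / (B / c) = A / B := by
  rcases eq_or_ne B 0 with hB | hB
  · simp [hB]
  · field_simp

/-- The function `Φ` built from the inverse bifurcation map `Ẑ` extends
continuously to `z*` with limit `3 l''(z*)³ / α_l(z*)`. -/
theorem phi_limit_at_minimum
    (l : ℝ → ℝ) (zs : ℝ)
    (hl : ContDiff ℝ 5 l) (hmin : IsLocalMin l zs)
    (hl2 : 0 < iteratedDeriv 2 l zs)
    (hps : 0 < 3 * (iteratedDeriv 3 l zs) ^ 2 -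
        iteratedDeriv 4 l zs * iteratedDeriv 2 l zs)
    (σ : ℝ) (hσ : 0 < σ) (Z : ℝ → ℝ)
    (hZreg : ContDiffOn ℝ 2 Z (Set.Ioo (zs - σ) (zs + σ)))
    (hZstar : Z zs = 2 / iteratedDeriv 2 l zs)
    (hZfix : ∀ z ∈ Set.Ioo (zs - σ) (zs + σ),
      deriv l z + deriv l (z - Z z * deriv l z) = 0)
    (hZ' : deriv Z zs = 0)
    (hZ'' : deriv (deriv Z) zs =
      2 * (3 * (iteratedDeriv 3 l zs) ^ 2 -
            iteratedDeriv 4 l zs * iteratedDeriv 2 l zs) /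
        (3 * (iteratedDeriv 2 l zs) ^ 3)) :
    Tendsto
      (fun z : ℝ =>
        (-(deriv Z z) * deriv l z * z *
              (iteratedDeriv 2 l (z - Z z * deriv l z) + 2 / Z z) +
            2 * deriv l z) /
          (deriv Z z * iteratedDeriv 2 l (z - Z z * deriv l z)))
      (𝓝[≠] zs)
      (𝓝 (3 * (iteratedDeriv 2 l zs) ^ 3 /
        (3 * (iteratedDeriv 3 l zs) ^ 2 -
          iteratedDeriv 4 l zs * iteratedDeriv 2 l zs))) := by
  set a := iteratedDeriv 2 l zs with ha
  set α := 3 * (iteratedDeriv 3 l zs) ^ 2 -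
      iteratedDeriv 4 l zs * iteratedDeriv 2 l zs with hα
  have hIoo : zs ∈ Set.Ioo (zs - σ) (zs + σ) := ⟨by linarith, by linarith⟩
  have hopen : IsOpen (Set.Ioo (zs - σ) (zs + σ)) := isOpen_Ioo
  have hnhds : Set.Ioo (zs - σ) (zs + σ) ∈ 𝓝 zs := hopen.mem_nhds hIoo
  -- facts about l
  have hl5 : ContDiff ℝ (4 + 1 : ℕ) l := by norm_num at hl ⊢; exact hl
  have hl4 : ContDiff ℝ 4 (deriv l) := (contDiff_succ_iff_deriv.mp hl5).2.2
  have hld : Differentiable ℝ (deriv l) := hl4.differentiable (by norm_num)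
  have hld2 : iteratedDeriv 2 l = deriv (deriv l) := by
    ext x
    rw [iteratedDeriv_succ, iteratedDeriv_one]
  have hl'zs : deriv l zs = 0 := hmin.deriv_eq_zero
  have hcl' : Continuous (deriv l) := hld.continuous
  have hcl'' : Continuous (iteratedDeriv 2 l) := by
    rw [hld2]
    exact hl4.continuous_deriv (by norm_num)
  -- facts about Z
  have hZ1 : ContDiffOn ℝ 1 (deriv Z) (Set.Ioo (zs - σ) (zs + σ)) :=
    hZreg.deriv_of_isOpen hopen (by norm_num)
  have hZca : ContinuousAt Z zs := (hZreg.continuousOn.continuousAt hnhds)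
  have hZ'ca : ContinuousAt (deriv Z) zs := (hZ1.continuousOn.continuousAt hnhds)
  have hZ'diff : DifferentiableAt ℝ (deriv Z) zs :=
    (hZ1.differentiableOn one_ne_zero).differentiableAt hnhds
  -- slopes
  have hslopeZ : Tendsto (fun z => deriv Z z / (z - zs)) (𝓝[≠] zs)
      (𝓝 (deriv (deriv Z) zs)) := by
    have h := hasDerivAt_iff_tendsto_slope.mp hZ'diff.hasDerivAt
    refine h.congr' ?_
    filter_upwards [self_mem_nhdsWithin] with z hz
    rw [slope_def_field, hZ', sub_zero]
  have hslopeL : Tendsto (fun z => deriv l z / (z - zs)) (𝓝[≠] zs) (𝓝 a) := by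
    have hd : HasDerivAt (deriv l) a zs := by
      have := (hld zs).hasDerivAt
      rwa [show deriv (deriv l) zs = a by rw [ha, hld2]] at this
    have h := hasDerivAt_iff_tendsto_slope.mp hd
    refine h.congr' ?_
    filter_upwards [self_mem_nhdsWithin] with z hz
    rw [slope_def_field, hl'zs, sub_zero]
  -- continuity facts at zs
  have ho : Tendsto (fun z => z - Z z * deriv l z) (𝓝 zs) (𝓝 zs) := by
    have : ContinuousAt (fun z => z - Z z * deriv l z) zs :=
      continuousAt_id.sub (hZca.mul hcl'.continuousAt)
    have := this.tendsto
    rwa [hl'zs, mul_zero, sub_zero] at this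
  have hlo : Tendsto (fun z => iteratedDeriv 2 l (z - Z z * deriv l z)) (𝓝 zs) (𝓝 a) :=
    (hcl''.tendsto zs).comp ho
  have hl'0 : Tendsto (fun z => deriv l z) (𝓝 zs) (𝓝 0) := by
    have := hcl'.tendsto zs
    rwa [hl'zs] at this
  have ha0 : a ≠ 0 := ne_of_gt hl2
  have hZzs : Z zs ≠ 0 := by rw [hZstar]; positivity
  have hinvZ : Tendsto (fun z => 2 / Z z) (𝓝 zs) (𝓝 a) := by
    have : Tendsto (fun z => 2 / Z z) (𝓝 zs) (𝓝 (2 / Z zs)) :=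
      (tendsto_const_nhds.div hZca.tendsto hZzs)
    rwa [hZstar, div_div_eq_mul_div, mul_comm, mul_div_assoc, div_self (by norm_num),
      mul_one] at this
  -- numerator and denominator (divided by z - zs)
  set Z'' := deriv (deriv Z) zs with hZ''def
  have hnum : Tendsto (fun z =>
      -(deriv Z z / (z - zs)) * deriv l z * z *
        (iteratedDeriv 2 l (z - Z z * deriv l z) + 2 / Z z)
        + 2 * (deriv l z / (z - zs))) (𝓝[≠] zs) (𝓝 (2 * a)) := by
    have h1 : Tendsto (fun z =>
        -(deriv Z z / (z - zs)) * deriv l z * z *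
          (iteratedDeriv 2 l (z - Z z * deriv l z) + 2 / Z z)) (𝓝[≠] zs)
        (𝓝 (-Z'' * 0 * zs * (a + a))) := by
      exact ((hslopeZ.neg.mul (hl'0.mono_left nhdsWithin_le_nhds)).mul
        (tendsto_id.mono_left nhdsWithin_le_nhds)).mul
        (((hlo.add hinvZ).mono_left nhdsWithin_le_nhds))
    have h2 : Tendsto (fun z => 2 * (deriv l z / (z - zs))) (𝓝[≠] zs) (𝓝 (2 * a)) :=
      tendsto_const_nhds.mul hslopeL
    have := h1.add h2
    rwa [mul_zero, zero_mul, zero_mul, zero_add] at this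
  have hden : Tendsto (fun z =>
      (deriv Z z / (z - zs)) * iteratedDeriv 2 l (z - Z z * deriv l z)) (𝓝[≠] zs)
      (𝓝 (Z'' * a)) :=
    hslopeZ.mul (hlo.mono_left nhdsWithin_le_nhds)
  have hZ''pos : 0 < Z'' := by
    rw [hZ'']
    positivity
  have hdenne : Z'' * a ≠ 0 := by positivity
  have hmain := hnum.div hden hdenne
  have hval : (2 * a) / (Z'' * a) = 3 * a ^ 3 / α := by
    have hαne : α ≠ 0 := ne_of_gt hps
    rw [hZ'']
    field_simp
  rw [hval] at hmain
  refine hmain.congr' ?_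
  filter_upwards [self_mem_nhdsWithin] with z hz
  have hc : (z : ℝ) - zs ≠ 0 := sub_ne_zero.mpr hz
  simp only [Pi.div_apply]
  have e1 : -(deriv Z z / (z - zs)) * deriv l z * z *
        (iteratedDeriv 2 l (z - Z z * deriv l z) + 2 / Z z)
        + 2 * (deriv l z / (z - zs)) =
      (-(deriv Z z) * deriv l z * z *
        (iteratedDeriv 2 l (z - Z z * deriv l z) + 2 / Z z) + 2 * deriv l z) / (z - zs) := by
    ring
  have e2 : (deriv Z z / (z - zs)) * iteratedDeriv 2 l (z - Z z * deriv l z) =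
      (deriv Z z * iteratedDeriv 2 l (z - Z z * deriv l z)) / (z - zs) := by
    ring
  rw [e1, e2, div_div_same_cancel _ _ _ hc]
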